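/- Let W ⊊ (ℂ*)^d be a proper toric subspace (a coset of a closed connected subgroup of the torus (ℂ*)^d, given as the intersection of finitely many toric hypersurfaces {z_1^{n_{j1}} ⋯ z_d^{n_{jd}} = c_j}). Then the one-point compactification of W (i.e. the closure of W together with ∞ inside the one-point compactification of (ℂ*)^d) is contained in a compact cone neighborhood of the point {∞} in the one-point compactification of (ℂ*)^d; in particular there exists a nonempty compact set K ⊂ (ℂ*)^d of the form {z : r_i ≤ |z_i| ≤ R_i for all i} (with 0 < r_i < R_i) disjoint from W. -/

import Mathlib

/-! ### Basic topological constructions: spheres, wedges, joins, suspensions, cones, smash -/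

/-- The `n`-dimensional sphere, realized as the unit sphere in `ℝ^(n+1)`. -/
abbrev SphereT (n : ℕ) : Type := Metric.sphere (0 : EuclideanSpace ℝ (Fin (n+1))) 1

/-- A base point on the `n`-sphere. -/
noncomputable def SpherePt (n : ℕ) : SphereT n :=
  ⟨EuclideanSpace.single 0 1, by simp⟩

/-- The wedge (one-point union) of a family of pointed spaces: the quotient of the disjoint
union identifying all the base points. -/
abbrev Wedge {ι : Type*} (X : ι → Type*) [∀ i, TopologicalSpace (X i)] (pt : ∀ i, X i) : Type _ :=
  Quot (fun a b : Σ i, X i => a.2 = pt a.1 ∧ b.2 = pt b.1)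

/-- The topological join `X ∗ Y`, as the quotient of `(X × Y × I) ⊔ X ⊔ Y` identifying
`(x, y, 0) ∼ x` and `(x, y, 1) ∼ y`.  With this model `∅ ∗ Y = Y` and `X ∗ ∅ = X`. -/
abbrev Join (X Y : Type*) [TopologicalSpace X] [TopologicalSpace Y] : Type _ :=
  Quot (fun a b : (X × Y × unitInterval) ⊕ X ⊕ Y =>
    (∃ x y, a = Sum.inl (x, y, 0) ∧ b = Sum.inr (Sum.inl x)) ∨
    (∃ x y, a = Sum.inl (x, y, 1) ∧ b = Sum.inr (Sum.inr y)))

/-- The point of `X ∗ Y` coming from a point of `Y`. -/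
def JoinPtRight (X : Type*) {Y : Type*} [TopologicalSpace X] [TopologicalSpace Y] (y : Y) :
    Join X Y := Quot.mk _ (Sum.inr (Sum.inr y))

/-- The (unreduced) suspension `ΣX`, with two cone points; for well-pointed spaces it is
homotopy equivalent to the reduced suspension, and `Σ∅ = S⁰` (matching the convention
`Σ^{i} X ≃ X ∗ S^{i-1}` used for joins). -/
abbrev Susp (X : Type*) [TopologicalSpace X] : Type _ :=
  Quot (fun a b : (X × unitInterval) ⊕ Bool =>
    (∃ x, a = Sum.inl (x, 0) ∧ b = Sum.inr false) ∨
    (∃ x, a = Sum.inl (x, 1) ∧ b = Sum.inr true))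

/-- The north pole of the suspension, used as base point. -/
def SuspPt (X : Type*) [TopologicalSpace X] : Susp X := Quot.mk _ (Sum.inr true)

/-- Iterated suspension, as a bundled space. -/
noncomputable def SuspIterT : ℕ → TopCat.{0} → TopCat.{0}
  | 0, X => X
  | n+1, X => TopCat.of (Susp (SuspIterT n X))

/-- `n`-fold suspension `Σⁿ X`. -/
abbrev SuspIter (n : ℕ) (X : Type) [TopologicalSpace X] : Type :=
  SuspIterT n (TopCat.of X)

/-- Base point of an iterated suspension (for at least one suspension). -/
noncomputable def SuspIterPt (n : ℕ) (X : Type) [TopologicalSpace X] : SuspIter (n+1) X :=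
  SuspPt (SuspIterT n (TopCat.of X))

/-- The cone on `Y` with apex point; `Cone ∅` is a single point. -/
abbrev ConeT (Y : Type*) [TopologicalSpace Y] : Type _ :=
  Quot (fun a b : (Y × unitInterval) ⊕ Unit =>
    ∃ y, a = Sum.inl (y, 1) ∧ b = Sum.inr ())

/-- Apex of the cone. -/
def ConeApex (Y : Type*) [TopologicalSpace Y] : ConeT Y := Quot.mk _ (Sum.inr ())

/-- `N` is a compact cone neighborhood of `x₀`: a compact neighborhood which is a cone
with cone point `x₀`. -/
def IsCompactConeNbhd {X : Type*} [TopologicalSpace X] (N : Set X) (x₀ : X) : Prop :=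
  IsCompact N ∧ N ∈ nhds x₀ ∧
    ∃ (Y : Type) (_ : TopologicalSpace Y) (e : ConeT Y ≃ₜ ↥N),
      ((e (ConeApex Y) : ↥N) : X) = x₀

/-- The smash product `X ∧ Y` of two pointed spaces: the quotient of `X × Y`
collapsing `X ∨ Y = (X × {y₀}) ∪ ({x₀} × Y)` to a point. -/
abbrev Smash (X Y : Type*) [TopologicalSpace X] [TopologicalSpace Y] (x₀ : X) (y₀ : Y) : Type _ :=
  Quot (fun a b : X × Y => (a.1 = x₀ ∨ a.2 = y₀) ∧ (b.1 = x₀ ∨ b.2 = y₀))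

/-- A continuous map is a homotopy equivalence. -/
def IsHomotopyEquiv {X Y : Type*} [TopologicalSpace X] [TopologicalSpace Y] (f : C(X, Y)) : Prop :=
  ∃ g : C(Y, X), (g.comp f).Homotopic (ContinuousMap.id X) ∧ (f.comp g).Homotopic (ContinuousMap.id Y)

/-- A map `f : A → B` is a (Hurewicz) cofibration: it satisfies the homotopy extension
property with respect to all spaces. -/
def IsCofibration {A B : Type*} [TopologicalSpace A] [TopologicalSpace B] (f : C(A, B)) : Prop :=
  ∀ (Y : Type*) (_ : TopologicalSpace Y) (g : C(B, Y)) (H : C(A × unitInterval, Y)),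
    (∀ a, H (a, 0) = g (f a)) →
    ∃ G : C(B × unitInterval, Y), (∀ b, G (b, 0) = g b) ∧ ∀ a t, G (f a, t) = H (a, t)

/-! ### Order complexes, intersection posets and homotopy colimits over posets -/

/-- The geometric realization of the order complex of the poset `P`, restricted to chains
inside `S ⊆ P`: the space of finitely supported "barycentric coordinate" functions whose
support is a nonempty chain contained in `S`. -/
def OrderSimplices (P : Type*) [Preorder P] (S : Set P) : Set (P → ℝ) :=
  {f | (∀ p, 0 ≤ f p) ∧ (Function.support f).Finite ∧ Function.support f ⊆ S ∧
       IsChain (· ≤ ·) (Function.support f) ∧ ∑ᶠ p, f p = 1}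

/-- The intersection poset of a collection `Ps` of subsets of `X`, ordered by **reverse**
inclusion (`a ≤ b ↔ b.carrier ⊆ a.carrier`). -/
structure RevPoset {X : Type*} (Ps : Set (Set X)) : Type _ where
  carrier : Set X
  mem : carrier ∈ Ps

instance {X : Type*} {Ps : Set (Set X)} : PartialOrder (RevPoset Ps) where
  le a b := b.carrier ⊆ a.carrier
  le_refl a := subset_rfl
  le_trans a b c h1 h2 := Set.Subset.trans h2 h1
  le_antisymm a b h1 h2 := by
    cases a; cases b; simp only [RevPoset.mk.injEq]; exact Set.Subset.antisymm h2 h1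

/-- `μ` is the `0̂`-row `μ(0̂, ·)` of the Möbius function of an intersection poset with
least element `bot`: `μ(0̂,0̂) = 1` and `∑_{0̂ ≤ γ ≤ β} μ(0̂,γ) = 0` for every `β ≠ 0̂`. -/
def IsMobiusOn {X : Type*} {Ps : Set (Set X)} (bot : RevPoset Ps) (μ : RevPoset Ps → ℤ) : Prop :=
  μ bot = 1 ∧ ∀ β : RevPoset Ps, β ≠ bot → (∑ᶠ γ ∈ Set.Iic β, μ γ) = 0

/-- A diagram of topological spaces over a poset `P`, with maps pointing downwards. -/
structure PosetDiagram (P : Type*) [Preorder P] : Type _ where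
  obj : P → Type
  topo : ∀ p, TopologicalSpace (obj p)
  map : ∀ {p q : P}, q ≤ p → @ContinuousMap (obj p) (obj q) (topo p) (topo q)
  map_id : ∀ (p : P) (h : p ≤ p), map h = @ContinuousMap.id (obj p) (topo p)
  map_comp : ∀ {p q r : P} (h₁ : q ≤ p) (h₂ : r ≤ q),
    @ContinuousMap.comp (obj p) (obj q) (obj r) (topo p) (topo q) (topo r) (map h₂) (map h₁)
      = map (le_trans h₂ h₁)

attribute [instance] PosetDiagram.topo

/-- The colimit of a poset diagram: glue `x ∈ D(p)` with its images `D(p ≥ q)(x)`. -/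
abbrev PColim {P : Type*} [Preorder P] (D : PosetDiagram P) : Type _ :=
  Quot (fun a b : Σ p : P, D.obj p => ∃ h : b.1 ≤ a.1, b.2 = D.map h a.2)

/-- The homotopy colimit of a poset diagram `D`, in its standard "simplicial" model:
the disjoint union of the spaces `Δ(P_{≤p}) × D(p)` glued along the rule that a point
whose simplex coordinate is supported below `q ≤ p` is identified with its image in the
`q`-th piece. -/
abbrev Hocolim {P : Type*} [Preorder P] (D : PosetDiagram P) : Type _ :=
  Quot (fun a b : Σ p : P, ↥(OrderSimplices P (Set.Iic p)) × D.obj p =>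
    ∃ h : b.1 ≤ a.1, (a.2.1 : P → ℝ) = (b.2.1 : P → ℝ) ∧ b.2.2 = D.map h a.2.2)

/-- The canonical collapsing map from the homotopy colimit to the colimit. -/
def hocolimToColim {P : Type*} [Preorder P] (D : PosetDiagram P) : C(Hocolim D, PColim D) where
  toFun := Quot.lift (fun a => Quot.mk _ ⟨a.1, a.2.2⟩)
    (fun a b hab => by
      obtain ⟨h, -, he⟩ := hab
      exact Quot.sound ⟨h, he⟩)
  continuous_toFun := by
    apply continuous_quot_lift
    apply continuous_sigma
    intro p
    exact (continuous_quot_mk.comp (continuous_sigmaMk (σ := fun p => D.obj p))).comp continuous_snd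

/-- The diagram of spaces associated to a collection of subspaces of `X`, sending each
member to itself and each order relation to the corresponding inclusion map. -/
def inclusionDiagram {X : Type} [TopologicalSpace X] (Ps : Set (Set X)) :
    PosetDiagram (RevPoset Ps) where
  obj p := ↥p.carrier
  topo p := inferInstance
  map {p q} h := ⟨Set.inclusion h, continuous_inclusion h⟩
  map_id := by intros; rfl
  map_comp := by intros; rfl

/-! ### The complex torus and characters -/

/-- The complex torus `(ℂ*)^l`, as the subset of `ℂ^l` of points with all coordinates nonzero. -/
def TorusSet (l : ℕ) : Set (Fin l → ℂ) := {z | ∀ i, z i ≠ 0}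

/-- Evaluation of the character (Laurent monomial) with exponent vector `n` at `z`. -/
noncomputable def charEval {l : ℕ} (n : Fin l → ℤ) (z : Fin l → ℂ) : ℂ := ∏ i, z i ^ n i

/-- The union of the complex coordinate axes in `ℂ^l` (the lines where all but one
coordinate vanish). -/
def coordAxes (l : ℕ) : Set (Fin l → ℂ) := {z | ∃ j, ∀ i, i ≠ j → z i = 0}


/-! ### Auxiliary development for Statement 5 -/

namespace ToricProof

open scoped OnePoint

variable {d : ℕ}

lemma torus_isOpen (d : ℕ) : IsOpen (TorusSet d) := by
  have h : TorusSet d = ⋂ i, (fun z : Fin d → ℂ => z i) ⁻¹' ({0}ᶜ) := by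
    ext z; simp [TorusSet]
  rw [h]
  exact isOpen_iInter_of_finite fun i => isOpen_compl_singleton.preimage (continuous_apply i)

/-- Coordinatewise log of absolute values. -/
noncomputable def tlog (z : ↥(TorusSet d)) : Fin d → ℝ :=
  fun i => Real.log (‖(z : Fin d → ℂ) i‖)

lemma abs_pos' (z : ↥(TorusSet d)) (i : Fin d) : 0 < ‖(z : Fin d → ℂ) i‖ :=
  norm_pos_iff.2 (z.2 i)

lemma continuous_tlog : Continuous (tlog (d := d)) := by
  refine continuous_pi fun i => ?_
  rw [continuous_iff_continuousAt]
  intro z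
  have h1 : ContinuousAt Real.log (‖(z : Fin d → ℂ) i‖) :=
    Real.continuousAt_log (abs_pos' z i).ne'
  have h2 : ContinuousAt (fun z : ↥(TorusSet d) => ‖(z : Fin d → ℂ) i‖) z :=
    (continuous_norm.comp ((continuous_apply i).comp continuous_subtype_val)).continuousAt
  exact h1.comp (f := fun z : ↥(TorusSet d) => ‖(z : Fin d → ℂ) i‖) h2

/-- Radial flow in logarithmic coordinates, centered at `p`. -/
noncomputable def gflow (p : Fin d → ℝ) (x : ↥(TorusSet d)) (a : ℝ) : ↥(TorusSet d) :=
  ⟨fun i => (x : Fin d → ℂ) i * Complex.exp ((a * (tlog x i - p i) : ℝ)),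
   fun i => mul_ne_zero (x.2 i) (Complex.exp_ne_zero _)⟩

lemma gflow_coe (p : Fin d → ℝ) (x : ↥(TorusSet d)) (a : ℝ) (i : Fin d) :
    (gflow p x a : Fin d → ℂ) i
      = (x : Fin d → ℂ) i * Complex.exp ((a * (tlog x i - p i) : ℝ)) := rfl

lemma tlog_gflow (p : Fin d → ℝ) (x : ↥(TorusSet d)) (a : ℝ) :
    tlog (gflow p x a) = fun i => tlog x i + a * (tlog x i - p i) := by
  funext i
  have h0 : ‖(x : Fin d → ℂ) i‖ ≠ 0 := (abs_pos' x i).ne'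
  show Real.log (‖(x : Fin d → ℂ) i * Complex.exp _‖) = _
  rw [norm_mul, Complex.norm_exp, Complex.ofReal_re,
    Real.log_mul h0 (Real.exp_ne_zero _), Real.log_exp]
  rfl

lemma tlog_gflow_sub (p : Fin d → ℝ) (x : ↥(TorusSet d)) (a : ℝ) :
    tlog (gflow p x a) - p = (1 + a) • (tlog x - p) := by
  funext i
  simp only [tlog_gflow, Pi.sub_apply, Pi.smul_apply, smul_eq_mul]
  ring

lemma norm_tlog_gflow (p : Fin d → ℝ) (x : ↥(TorusSet d)) (a : ℝ) (ha : 0 ≤ 1 + a) :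
    ‖tlog (gflow p x a) - p‖ = (1 + a) * ‖tlog x - p‖ := by
  rw [tlog_gflow_sub, norm_smul, Real.norm_eq_abs, abs_of_nonneg ha]

lemma gflow_gflow (p : Fin d → ℝ) (x : ↥(TorusSet d)) (a b : ℝ) :
    gflow p (gflow p x a) b = gflow p x (a + b + b * a) := by
  apply Subtype.ext; funext i
  show (gflow p x a : Fin d → ℂ) i * Complex.exp _ = _
  rw [gflow_coe, gflow_coe, mul_assoc, ← Complex.exp_add, ← Complex.ofReal_add]
  congr 2
  have h := congrFun (tlog_gflow p x a) i
  rw [h]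
  ring

lemma gflow_zero (p : Fin d → ℝ) (x : ↥(TorusSet d)) : gflow p x 0 = x := by
  apply Subtype.ext; funext i
  rw [gflow_coe]
  simp

lemma gflow_inj (p : Fin d → ℝ) {x y : ↥(TorusSet d)} {a : ℝ} (ha : 0 < 1 + a)
    (h : gflow p x a = gflow p y a) : x = y := by
  have hL : tlog x = tlog y := by
    have h2 := congrArg tlog h
    rw [tlog_gflow, tlog_gflow] at h2
    funext i
    have h3 := congrFun h2 i
    have h4 : (1 + a) * (tlog x i - p i) = (1 + a) * (tlog y i - p i) := by
      linear_combination h3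
    have h5 := mul_left_cancel₀ (ne_of_gt ha) h4
    linarith
  apply Subtype.ext; funext i
  have h5 := congrFun (congrArg Subtype.val h) i
  rw [gflow_coe, gflow_coe, hL] at h5
  exact mul_right_cancel₀ (Complex.exp_ne_zero _) h5

lemma isCompact_coordbox (p : Fin d → ℝ) (R : ℝ) :
    IsCompact {z : ↥(TorusSet d) | ∀ i, |tlog z i - p i| ≤ R} := by
  set A : Set (Fin d → ℂ) := Set.univ.pi fun i =>
    Metric.closedBall (0 : ℂ) (Real.exp (p i + R)) ∩ {w | Real.exp (p i - R) ≤ ‖w‖}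
    with hAdef
  have hA : IsCompact A := isCompact_univ_pi fun i =>
    (isCompact_closedBall _ _).inter_right (isClosed_le continuous_const continuous_norm)
  have hAsub : A ⊆ TorusSet d := by
    intro w hw i
    have h1 := (hw i (Set.mem_univ i)).2
    intro h0
    rw [h0] at h1
    simpa using h1.trans_lt' (Real.exp_pos _)
  have hmem : ∀ z : ↥(TorusSet d),
      (∀ i, |tlog z i - p i| ≤ R) ↔ (z : Fin d → ℂ) ∈ A := by
    intro z
    rw [hAdef, Set.mem_univ_pi]
    refine forall_congr' fun i => ?_
    have hz := abs_pos' z i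
    rw [abs_le, Set.mem_inter_iff, Metric.mem_closedBall, Complex.dist_eq, sub_zero,
      Set.mem_setOf_eq]
    constructor
    · rintro ⟨h1, h2⟩
      exact ⟨(Real.log_le_iff_le_exp hz).1 (by unfold tlog at h2; linarith),
        (Real.le_log_iff_exp_le hz).1 (by unfold tlog at h1; linarith)⟩
    · rintro ⟨h1, h2⟩
      have h3 := (Real.log_le_iff_le_exp hz).2 h1
      have h4 := (Real.le_log_iff_exp_le hz).2 h2
      unfold tlog
      constructor <;> linarith
  rw [Topology.IsEmbedding.subtypeVal.isCompact_iff]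
  have himg : Subtype.val '' {z : ↥(TorusSet d) | ∀ i, |tlog z i - p i| ≤ R} = A := by
    apply Set.Subset.antisymm
    · rintro w ⟨z, hz, rfl⟩
      exact (hmem z).1 hz
    · intro w hw
      exact ⟨⟨w, hAsub hw⟩, (hmem ⟨w, hAsub hw⟩).2 hw, rfl⟩
  rw [himg]
  exact hA

lemma isCompact_normball (p : Fin d → ℝ) (R : ℝ) :
    IsCompact {z : ↥(TorusSet d) | ‖tlog z - p‖ ≤ R} := by
  refine (isCompact_coordbox p R).of_isClosed_subset
    (isClosed_le ((continuous_tlog.sub continuous_const).norm) continuous_const) ?_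
  intro z hz i
  calc |tlog z i - p i| = ‖(tlog z - p) i‖ := by rw [Real.norm_eq_abs]; rfl
  _ ≤ ‖tlog z - p‖ := norm_le_pi_norm _ i
  _ ≤ R := hz

lemma isCompact_sphere1 (p : Fin d → ℝ) :
    IsCompact {z : ↥(TorusSet d) | ‖tlog z - p‖ = 1} :=
  (isCompact_normball p 1).of_isClosed_subset
    (isClosed_eq ((continuous_tlog.sub continuous_const).norm) continuous_const)
    (fun _ hz => le_of_eq hz)

lemma char_log_sum (n : Fin d → ℤ) (z : ↥(TorusSet d)) :
    Real.log (‖∏ i, ((z : Fin d → ℂ) i) ^ n i‖) = ∑ i, (n i : ℝ) * tlog z i := by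
  rw [norm_prod, Real.log_prod]
  · refine Finset.sum_congr rfl fun i _ => ?_
    rw [norm_zpow, Real.log_zpow]
    rfl
  · intro i _
    rw [norm_zpow]
    exact zpow_ne_zero _ ((abs_pos' z i).ne')

lemma continuous_gflow_pair (p : Fin d → ℝ) :
    Continuous (fun q : ↥(TorusSet d) × ℝ => gflow p q.1 q.2) := by
  apply Continuous.subtype_mk
  refine continuous_pi fun i => Continuous.mul ?_ ?_
  · exact (continuous_apply i).comp (continuous_subtype_val.comp continuous_fst)
  · exact Complex.continuous_exp.comp (Complex.continuous_ofReal.comp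
      (continuous_snd.mul
        (((continuous_apply i).comp (continuous_tlog.comp continuous_fst)).sub
          continuous_const)))

lemma cone_part (p : Fin d → ℝ) (W : Set ↥(TorusSet d))
    (hsep : ∀ z ∈ W, 1 ≤ ‖tlog z - p‖) :
    ∃ N : Set (OnePoint ↥(TorusSet d)), IsCompactConeNbhd N OnePoint.infty ∧
      closure ((fun z : ↥(TorusSet d) => (z : OnePoint ↥(TorusSet d))) '' W) ∪
        {OnePoint.infty} ⊆ N := by
  classical
  haveI : LocallyCompactSpace ↥(TorusSet d) := (torus_isOpen d).locallyCompactSpace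
  set B : Set ↥(TorusSet d) := {z | ‖tlog z - p‖ < 1} with hBdef
  set N : Set (OnePoint ↥(TorusSet d)) := ((↑) '' B)ᶜ with hNdef
  have hBopen : IsOpen B :=
    isOpen_lt ((continuous_tlog.sub continuous_const).norm) continuous_const
  have hNclosed : IsClosed N := (OnePoint.isOpen_image_coe.2 hBopen).isClosed_compl
  have hinfty : (OnePoint.infty : OnePoint ↥(TorusSet d)) ∈ N := fun h =>
    OnePoint.infty_notMem_image_coe h
  have hcoe_mem : ∀ z : ↥(TorusSet d), ((z : OnePoint ↥(TorusSet d)) ∈ N ↔ 1 ≤ ‖tlog z - p‖) := by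
    intro z
    rw [hNdef, Set.mem_compl_iff, OnePoint.coe_injective.mem_set_image, hBdef,
      Set.mem_setOf_eq]
    exact not_lt
  have hNnhds : N ∈ nhds (OnePoint.infty : OnePoint ↥(TorusSet d)) := by
    rw [OnePoint.hasBasis_nhds_infty.mem_iff]
    have hcl : IsClosed {z : ↥(TorusSet d) | ‖tlog z - p‖ ≤ 1} := by
      apply isClosed_le
      · exact (continuous_tlog.sub continuous_const).norm
      · exact continuous_const
    refine ⟨{z : ↥(TorusSet d) | ‖tlog z - p‖ ≤ 1}, ⟨hcl, isCompact_normball p 1⟩, ?_⟩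
    rintro x (⟨z, hz, rfl⟩ | hx)
    · exact (hcoe_mem z).2 (le_of_lt (not_le.1 hz))
    · rw [Set.mem_singleton_iff] at hx
      rw [hx]; exact hinfty
  have hsubset : closure ((fun z : ↥(TorusSet d) => (z : OnePoint ↥(TorusSet d))) '' W) ∪ {OnePoint.infty} ⊆ N := by
    apply Set.union_subset
    · apply closure_minimal _ hNclosed
      rintro x ⟨z, hzW, rfl⟩
      exact (hcoe_mem z).2 (hsep z hzW)
    · intro x hx
      rw [Set.mem_singleton_iff] at hx
      rw [hx]; exact hinfty
  -- the link of the cone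
  let Z : Type := {z : ↥(TorusSet d) // ‖tlog z - p‖ = 1}
  haveI : CompactSpace Z := isCompact_iff_compactSpace.1 (isCompact_sphere1 p)
  haveI : T2Space (OnePoint ↥(TorusSet d)) := inferInstance
  -- the cone map
  let G : (Z × unitInterval) ⊕ Unit → OnePoint ↥(TorusSet d) := Sum.elim
    (fun w => if h : ((w.2 : ℝ)) = 1 then OnePoint.infty
      else ((gflow p w.1.1 ((w.2 : ℝ) / (1 - (w.2 : ℝ)))) : OnePoint ↥(TorusSet d)))
    (fun _ => OnePoint.infty)
  have hGresp : ∀ a b : (Z × unitInterval) ⊕ Unit,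
      (∃ y, a = Sum.inl (y, 1) ∧ b = Sum.inr ()) → G a = G b := by
    rintro a b ⟨y, rfl, rfl⟩
    have h1 : (((1 : unitInterval) : ℝ)) = 1 := rfl
    show (if h : (((1 : unitInterval) : ℝ)) = 1 then _ else _) = _
    rw [dif_pos h1]
    rfl
  have hnorm : ∀ (z : Z) (s : ℝ), 0 ≤ s → ‖tlog (gflow p z.1 s) - p‖ = 1 + s := by
    intro z s hs
    rw [norm_tlog_gflow p z.1 s (by linarith), z.2, mul_one]
  have hGmem : ∀ a, G a ∈ N := by
    rintro (⟨z, t⟩ | u)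
    · by_cases h : ((t : ℝ)) = 1
      · show (if _ : ((t:ℝ)) = 1 then _ else _) ∈ N
        rw [dif_pos h]; exact hinfty
      · show (if _ : ((t:ℝ)) = 1 then _ else _) ∈ N
        rw [dif_neg h]
        refine (hcoe_mem _).2 ?_
        have ht1 : (t : ℝ) < 1 := lt_of_le_of_ne t.2.2 h
        have hσ : 0 ≤ (t : ℝ) / (1 - (t : ℝ)) := div_nonneg t.2.1 (by linarith)
        rw [hnorm z _ hσ]; linarith
    · exact hinfty
  let f : ConeT Z → ↥N := fun x =>
    ⟨Quot.lift G hGresp x, Quot.ind (β := fun x => Quot.lift G hGresp x ∈ N) hGmem x⟩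
  -- continuity
  have hfc : Continuous f := by
    refine Continuous.subtype_mk ?_ _
    refine continuous_quot_lift _ ?_
    refine Continuous.sumElim ?_ continuous_const
    rw [continuous_iff_continuousAt]
    rintro ⟨z, t⟩
    by_cases ht : ((t : ℝ)) = 1
    · -- tendsto to infinity
      have hval : (fun w : Z × unitInterval => if h : ((w.2 : ℝ)) = 1 then OnePoint.infty
          else ((gflow p w.1.1 ((w.2 : ℝ) / (1 - (w.2 : ℝ)))) : OnePoint ↥(TorusSet d))) (z, t)
          = OnePoint.infty := dif_pos ht
      unfold ContinuousAt
      rw [hval, OnePoint.hasBasis_nhds_infty.tendsto_right_iff]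
      rintro s ⟨hscl, hscomp⟩
      obtain ⟨R, hR0, hRs⟩ : ∃ R : ℝ, 0 ≤ R ∧ ∀ x ∈ s, ‖tlog x - p‖ ≤ R := by
        rcases (hscomp.image ((continuous_tlog.sub continuous_const).norm)).bddAbove
          with ⟨R, hR⟩
        exact ⟨max R 0, le_max_right _ _,
          fun x hx => le_trans (hR (Set.mem_image_of_mem _ hx)) (le_max_left _ _)⟩
      have h1R : (0:ℝ) < 1 + R := by linarith
      have hc1 : R / (1 + R) < 1 := by rw [div_lt_one h1R]; linarith
      have hmemV : {w : Z × unitInterval | R / (1 + R) < (w.2 : ℝ)} ∈ nhds (z, t) := by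
        refine IsOpen.mem_nhds ?_ ?_
        · exact isOpen_lt continuous_const (continuous_subtype_val.comp continuous_snd)
        · show R / (1 + R) < (t : ℝ)
          rw [ht]; exact hc1
      filter_upwards [hmemV] with w hw
      by_cases h1 : ((w.2 : ℝ)) = 1
      · exact Or.inr (by rw [dif_pos h1]; rfl)
      · rw [dif_neg h1]
        refine Or.inl (Set.mem_image_of_mem _ ?_)
        intro hmem
        have hlt : (w.2 : ℝ) < 1 := lt_of_le_of_ne w.2.2.2 h1
        have h1t : (0:ℝ) < 1 - (w.2 : ℝ) := by linarith
        have hσ : 0 ≤ (w.2 : ℝ) / (1 - (w.2 : ℝ)) := div_nonneg w.2.2.1 h1t.le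
        have hb := hRs _ hmem
        rw [hnorm w.1 _ hσ] at hb
        have he : 1 + (w.2 : ℝ) / (1 - (w.2 : ℝ)) = 1 / (1 - (w.2 : ℝ)) := by
          field_simp
          ring
        rw [he] at hb
        have hb2 : 1 ≤ R * (1 - (w.2 : ℝ)) := by
          rw [div_le_iff₀ h1t] at hb
          linarith
        have hw2 : R < (w.2 : ℝ) * (1 + R) := by
          rw [div_lt_iff₀ h1R] at hw
          exact hw
        nlinarith
    · -- continuous at an ordinary point
      have hU : {w : Z × unitInterval | ((w.2 : ℝ)) ≠ 1} ∈ nhds (z, t) := by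
        refine IsOpen.mem_nhds ?_ ht
        exact isOpen_compl_singleton.preimage
          ((continuous_subtype_val.comp continuous_snd) : Continuous
            fun w : Z × unitInterval => (w.2 : ℝ))
      have hcg : ContinuousAt (fun w : Z × unitInterval =>
          ((gflow p w.1.1 ((w.2 : ℝ) / (1 - (w.2 : ℝ)))) : OnePoint ↥(TorusSet d))) (z, t) := by
        refine (OnePoint.continuous_coe.continuousAt).comp ?_
        have h2 : ContinuousAt (fun w : Z × unitInterval =>
            ((w.1.1 : ↥(TorusSet d)), (w.2 : ℝ) / (1 - (w.2 : ℝ)))) (z, t) := by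
          refine ContinuousAt.prodMk ?_ ?_
          · exact ((continuous_subtype_val.comp continuous_fst)).continuousAt
          · refine ContinuousAt.div ?_ ?_ ?_
            · exact ((continuous_subtype_val.comp continuous_snd)).continuousAt
            · exact (continuous_const.sub
                (continuous_subtype_val.comp continuous_snd)).continuousAt
            · simpa using sub_ne_zero_of_ne (Ne.symm ht)
        exact ((continuous_gflow_pair p).continuousAt).comp h2
      refine hcg.congr ?_
      refine Filter.eventuallyEq_of_mem hU fun w hw => ?_
      rw [dif_neg hw]
  -- bijectivity
  have hinj : Function.Injective f := by
    intro x y hxy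
    have hval : Quot.lift G hGresp x = Quot.lift G hGresp y := congrArg Subtype.val hxy
    clear hxy
    induction x using Quot.ind with | _ a =>
    induction y using Quot.ind with | _ b =>
    have hkey : ∀ c : (Z × unitInterval) ⊕ Unit, G c = OnePoint.infty →
        (Quot.mk _ c : ConeT Z) = Quot.mk _ (Sum.inr ()) := by
      rintro (⟨z', t'⟩ | u) hcc
      · by_cases h : ((t' : ℝ)) = 1
        · exact Quot.sound ⟨z', by rw [show t' = 1 from Subtype.ext h], rfl⟩
        · exfalso
          have : G (Sum.inl (z', t')) = _ := dif_neg h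
          rw [this] at hcc
          exact OnePoint.coe_ne_infty _ hcc
      · rfl
    have hval' : G a = G b := hval
    by_cases hGi : G a = OnePoint.infty
    · rw [hkey a hGi, hkey b (hval'.symm.trans hGi)]
    · rcases a with ⟨z1, t1⟩ | u1
      · rcases b with ⟨z2, t2⟩ | u2
        · have h1 : ((t1 : ℝ)) ≠ 1 := fun h => hGi (dif_pos h)
          have h2 : ((t2 : ℝ)) ≠ 1 := by
            intro h
            exact hGi (hval'.trans (dif_pos h))
          have hv2 : (↑(gflow p z1.1 ((t1:ℝ)/(1-(t1:ℝ)))) : OnePoint ↥(TorusSet d))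
              = (↑(gflow p z2.1 ((t2:ℝ)/(1-(t2:ℝ)))) : OnePoint ↥(TorusSet d)) := by
            have e1 : G (Sum.inl (z1, t1)) = _ := dif_neg h1
            have e2 : G (Sum.inl (z2, t2)) = _ := dif_neg h2
            rw [← e1, ← e2]; exact hval' 
          rw [OnePoint.coe_eq_coe] at hv2
          have hlt1 : (t1 : ℝ) < 1 := lt_of_le_of_ne t1.2.2 h1
          have hlt2 : (t2 : ℝ) < 1 := lt_of_le_of_ne t2.2.2 h2
          have h1t1 : (0:ℝ) < 1 - (t1 : ℝ) := by linarith
          have h1t2 : (0:ℝ) < 1 - (t2 : ℝ) := by linarith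
          have hs1 : 0 ≤ (t1 : ℝ) / (1 - (t1 : ℝ)) := div_nonneg t1.2.1 h1t1.le
          have hs2 : 0 ≤ (t2 : ℝ) / (1 - (t2 : ℝ)) := div_nonneg t2.2.1 h1t2.le
          have hns : ‖tlog (gflow p z1.1 ((t1:ℝ)/(1-(t1:ℝ)))) - p‖
              = ‖tlog (gflow p z2.1 ((t2:ℝ)/(1-(t2:ℝ)))) - p‖ := by rw [hv2]
          rw [hnorm z1 _ hs1, hnorm z2 _ hs2] at hns
          have hss : (t1:ℝ)/(1-(t1:ℝ)) = (t2:ℝ)/(1-(t2:ℝ)) := by linarith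
          have htt : t1 = t2 := by
            apply Subtype.ext
            rw [div_eq_div_iff h1t1.ne' h1t2.ne'] at hss
            nlinarith
          rw [hss] at hv2
          have hzz : z1 = z2 := Subtype.ext (gflow_inj p (by linarith) hv2)
          rw [htt, hzz]
        · exact absurd (hval'.trans rfl) hGi
      · exact absurd rfl hGi
  have hsurj : Function.Surjective f := by
    rintro ⟨n, hn⟩
    induction n using OnePoint.rec with
    | infty => exact ⟨Quot.mk _ (Sum.inr ()), rfl⟩
    | coe x =>
      have hx : 1 ≤ ‖tlog x - p‖ := (hcoe_mem x).1 hn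
      set r : ℝ := ‖tlog x - p‖ with hr
      have hr0 : (0:ℝ) < r := lt_of_lt_of_le one_pos hx
      set s : ℝ := r - 1 with hs
      have hs0 : 0 ≤ s := by rw [hs]; linarith
      have h1s : (0:ℝ) < 1 + s := by linarith
      set t : ℝ := s / (1 + s) with htdef
      have ht0 : 0 ≤ t := div_nonneg hs0 h1s.le
      have ht1 : t < 1 := by rw [htdef, div_lt_one h1s]; linarith
      have hra : 1 + (1/r - 1) = 1/r := by ring
      have hwsphere : ‖tlog (gflow p x (1/r - 1)) - p‖ = 1 := by
        rw [norm_tlog_gflow p x _ (by rw [hra]; positivity), hra, ← hr]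
        field_simp
      refine ⟨Quot.mk _ (Sum.inl (⟨gflow p x (1/r - 1), hwsphere⟩, ⟨t, ht0, ht1.le⟩)), ?_⟩
      apply Subtype.ext
      show G (Sum.inl (⟨gflow p x (1/r - 1), hwsphere⟩, ⟨t, ht0, ht1.le⟩)) = (x : OnePoint ↥(TorusSet d))
      have hcoet : ((⟨t, ht0, ht1.le⟩ : unitInterval) : ℝ) = t := rfl
      have hG : G (Sum.inl (⟨gflow p x (1/r - 1), hwsphere⟩, ⟨t, ht0, ht1.le⟩))
          = ((gflow p (gflow p x (1/r - 1)) (t / (1 - t))) : OnePoint ↥(TorusSet d)) :=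
        dif_neg (show ¬(((⟨t, ht0, ht1.le⟩ : unitInterval) : ℝ) = 1) from ht1.ne)
      rw [hG]
      have hts : t / (1 - t) = s := by
        have h1 : 1 - t = 1 / (1 + s) := by rw [htdef]; field_simp; ring
        rw [h1, htdef]
        field_simp
      rw [hts, gflow_gflow]
      have h0 : (1/r - 1) + s + s * (1/r - 1) = 0 := by
        rw [hs]; field_simp; ring
      rw [h0, gflow_zero]
  let e : ConeT Z ≃ₜ ↥N :=
    Continuous.homeoOfEquivCompactToT2 (f := Equiv.ofBijective f ⟨hinj, hsurj⟩) hfc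
  refine ⟨N, ⟨hNclosed.isCompact, hNnhds, Z, inferInstance, e, ?_⟩, hsubset⟩
  rfl

end ToricProof
/-- Let `W ⊊ (ℂ*)^d` be a proper toric subspace, given as the intersection
of finitely many toric hypersurfaces `{z₁^{n_{j1}} ⋯ z_d^{n_{jd}} = c_j}`.  Then the
one-point compactification of `W` (the closure of `W` together with `∞` inside the
one-point compactification of `(ℂ*)^d`) is contained in a compact cone neighborhood of
`∞`; in particular, there is a nonempty compact "polyannulus"
`K = {z ∣ rᵢ ≤ |zᵢ| ≤ Rᵢ}` (with `0 < rᵢ < Rᵢ`) disjoint from `W`. -/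
theorem toric_subspace_contained_in_cone_neighborhood (d m : ℕ) (hd : 1 ≤ d)
    (ch : Fin m → Fin d → ℤ) (c : Fin m → ℂ) (hc : ∀ j, c j ≠ 0)
    (W : Set ↥(TorusSet d))
    (hW : W = {z : ↥(TorusSet d) | ∀ j, ∏ i, ((z : Fin d → ℂ) i) ^ ch j i = c j})
    (hproper : W ≠ Set.univ) :
    (∃ N : Set (OnePoint ↥(TorusSet d)),
      IsCompactConeNbhd N OnePoint.infty ∧
      closure ((fun z : ↥(TorusSet d) => (z : OnePoint ↥(TorusSet d))) '' W) ∪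
          {OnePoint.infty} ⊆ N) ∧
    (∃ r R : Fin d → ℝ, (∀ i, 0 < r i ∧ r i < R i) ∧
      {z : ↥(TorusSet d) |
        ∀ i, r i ≤ ‖(z : Fin d → ℂ) i‖ ∧ ‖(z : Fin d → ℂ) i‖ ≤ R i}.Nonempty ∧
      Disjoint {z : ↥(TorusSet d) |
        ∀ i, r i ≤ ‖(z : Fin d → ℂ) i‖ ∧ ‖(z : Fin d → ℂ) i‖ ≤ R i} W) := by
  classical
  -- Step 1: find `p` so that `W` stays at log-distance at least 1 from `p`
  obtain ⟨p, hp⟩ : ∃ p : Fin d → ℝ, ∀ z ∈ W, 1 ≤ ‖ToricProof.tlog z - p‖ := by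
    by_cases hch : ∃ j, ch j ≠ 0
    · obtain ⟨j, hj⟩ := hch
      obtain ⟨i₀, hi₀⟩ : ∃ i, ch j i ≠ 0 := by
        by_contra h
        push_neg at h
        exact hj (funext h)
      set a : Fin d → ℝ := fun i => (ch j i : ℝ) with hadef
      set S : ℝ := ∑ i, |a i| with hSdef
      set tt : ℝ := Real.log (‖c j‖) with httdef
      have hS0 : 0 ≤ S := Finset.sum_nonneg fun i _ => abs_nonneg _
      have ha0 : a i₀ ≠ 0 := by
        simp only [hadef]
        exact_mod_cast hi₀
      set p : Fin d → ℝ := fun i => if i = i₀ then (tt + S + 1) / a i₀ else 0 with hpdef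
      have hsump : ∑ i, a i * p i = tt + S + 1 := by
        rw [hpdef, Finset.sum_eq_single i₀]
        · have hb : (fun i => if i = i₀ then (tt + S + 1) / a i₀ else 0) i₀
              = (tt + S + 1) / a i₀ := if_pos rfl
          rw [hb]
          field_simp
        · intro b _ hb
          have hb' : (fun i => if i = i₀ then (tt + S + 1) / a i₀ else 0) b = 0 := if_neg hb
          rw [hb', mul_zero]
        · intro h
          exact absurd (Finset.mem_univ i₀) h
      refine ⟨p, fun z hzW => ?_⟩
      have h1 : ∏ i, ((z : Fin d → ℂ) i) ^ ch j i = c j := by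
        rw [hW] at hzW
        exact hzW j
      have hzeq : ∑ i, a i * ToricProof.tlog z i = tt := by
        calc ∑ i, a i * ToricProof.tlog z i
            = Real.log (‖∏ i, ((z : Fin d → ℂ) i) ^ ch j i‖) :=
              (ToricProof.char_log_sum (ch j) z).symm
        _ = tt := by rw [h1]
      by_contra hlt
      push_neg at hlt
      have hcomp : ∀ i, |ToricProof.tlog z i - p i| ≤ ‖ToricProof.tlog z - p‖ := by
        intro i
        calc |ToricProof.tlog z i - p i| = ‖(ToricProof.tlog z - p) i‖ := by
              rw [Real.norm_eq_abs]; rfl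
        _ ≤ ‖ToricProof.tlog z - p‖ := norm_le_pi_norm _ i
      have hkey : S + 1 ≤ S * ‖ToricProof.tlog z - p‖ := by
        have h2 : |∑ i, a i * (ToricProof.tlog z i - p i)| = S + 1 := by
          have h3 : ∑ i, a i * (ToricProof.tlog z i - p i) = tt - (tt + S + 1) := by
            simp only [mul_sub]
            rw [Finset.sum_sub_distrib, hzeq, hsump]
          rw [h3, show tt - (tt + S + 1) = -(S + 1) by ring, abs_neg,
            abs_of_nonneg (by linarith)]
        calc S + 1 = |∑ i, a i * (ToricProof.tlog z i - p i)| := h2.symm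
        _ ≤ ∑ i, |a i * (ToricProof.tlog z i - p i)| := Finset.abs_sum_le_sum_abs _ _
        _ ≤ ∑ i, |a i| * ‖ToricProof.tlog z - p‖ := by
              refine Finset.sum_le_sum fun i _ => ?_
              rw [abs_mul]
              exact mul_le_mul_of_nonneg_left (hcomp i) (abs_nonneg _)
        _ = S * ‖ToricProof.tlog z - p‖ := by rw [hSdef, Finset.sum_mul]
      nlinarith [mul_le_mul_of_nonneg_left hlt.le hS0]
    · push_neg at hch
      have hCW : ∃ j, c j ≠ 1 := by
        by_contra hc1
        push_neg at hc1
        apply hproper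
        rw [hW]
        ext z
        simp only [Set.mem_setOf_eq, Set.mem_univ, iff_true]
        intro j
        rw [hch j, hc1 j]
        simp
      obtain ⟨j, hj1⟩ := hCW
      refine ⟨0, fun z hzW => absurd ?_ hj1⟩
      rw [hW] at hzW
      have h1 := hzW j
      rw [hch j] at h1
      simpa using h1.symm
  constructor
  · exact ToricProof.cone_part p W hp
  · refine ⟨fun i => Real.exp (p i - 1/2), fun i => Real.exp (p i + 1/2),
      fun i => ⟨Real.exp_pos _, Real.exp_lt_exp.2 (by linarith)⟩, ?_, ?_⟩
    · refine ⟨⟨fun i => ((Real.exp (p i) : ℝ) : ℂ), fun i => ?_⟩, fun i => ?_⟩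
      · simpa using (Real.exp_pos (p i)).ne'
      · have habs : ‖((Real.exp (p i) : ℝ) : ℂ)‖ = Real.exp (p i) := by
          rw [Complex.norm_real, Real.norm_of_nonneg (Real.exp_pos _).le]
        constructor
        · show Real.exp (p i - 1/2) ≤ ‖((Real.exp (p i) : ℝ) : ℂ)‖
          rw [habs]
          exact Real.exp_le_exp.2 (by linarith)
        · show ‖((Real.exp (p i) : ℝ) : ℂ)‖ ≤ Real.exp (p i + 1/2)
          rw [habs]
          exact Real.exp_le_exp.2 (by linarith)
    · rw [Set.disjoint_left]
      rintro z hzK hzW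
      have h1 := hp z hzW
      have h2 : ‖ToricProof.tlog z - p‖ ≤ 1/2 := by
        rw [pi_norm_le_iff_of_nonneg (by norm_num)]
        intro i
        obtain ⟨hlo, hhi⟩ := hzK i
        have hz := ToricProof.abs_pos' z i
        have h3 : ToricProof.tlog z i ≤ p i + 1/2 := by
          have := (Real.log_le_iff_le_exp hz).2 hhi
          unfold ToricProof.tlog
          linarith
        have h4 : p i - 1/2 ≤ ToricProof.tlog z i := by
          have := (Real.le_log_iff_exp_le hz).2 hlo
          unfold ToricProof.tlog
          linarith
        show ‖(ToricProof.tlog z - p) i‖ ≤ 1/2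
        rw [Real.norm_eq_abs]
        show |ToricProof.tlog z i - p i| ≤ 1/2
        rw [abs_le]
        constructor <;> linarith
      linarith
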